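/- Let λ ∈ ℂ with λ ≠ 0 and |λ| ≠ 1, and let A be the 2n×2n block diagonal matrix diag(J(λ,n), J(conj(λ)⁻¹, n)). Then there exists C ∈ GL(2n, ℂ) with C * conj(C) = I and C A C⁻¹ = (conj A)⁻¹. -/

import Mathlib

open Matrix Finset

/-- The `n × n` Jordan block with eigenvalue `λ`. -/
def jordanBlock (lam : ℂ) (n : ℕ) : Matrix (Fin n) (Fin n) ℂ :=
  Matrix.of fun i j => if (j : ℕ) = i then lam else if (j : ℕ) = i + 1 then 1 else 0

/-- The nilpotent shift matrix (ones on the superdiagonal). -/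
def Nshift (n : ℕ) : Matrix (Fin n) (Fin n) ℂ :=
  Matrix.of fun i j => if (j : ℕ) = (i : ℕ) + 1 then 1 else 0

/-- The conjugating matrix family. -/
noncomputable def Bmat (t : ℂ) (n : ℕ) : Matrix (Fin n) (Fin n) ℂ :=
  Matrix.of fun i j => if (i : ℕ) ≤ (j : ℕ) then
      (-1) ^ (n - 1 - (i : ℕ)) * ((n - 2 - (i : ℕ)).choose ((j : ℕ) - (i : ℕ)) : ℂ)
        * t ^ ((i : ℕ) + (j : ℕ)) * (t⁻¹) ^ (2 * (n - 1))
    else 0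

lemma jordanBlock_eq (t : ℂ) (n : ℕ) :
    jordanBlock t n = t • (1 : Matrix (Fin n) (Fin n) ℂ) + Nshift n := by
  ext i j
  simp only [jordanBlock, Nshift, Matrix.add_apply, Matrix.smul_apply, Matrix.one_apply,
    Matrix.of_apply, smul_eq_mul]
  by_cases h1 : (j : ℕ) = (i : ℕ)
  · have hij : i = j := Fin.ext h1.symm
    have h2 : ¬ (j : ℕ) = (i : ℕ) + 1 := by omega
    simp [h1, h2, hij]
  · have hne : ¬ i = j := fun h => h1 (by rw [h])
    by_cases h2 : (j : ℕ) = (i : ℕ) + 1 <;> simp [h1, h2, hne]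

lemma Nshift_mul (n : ℕ) (M : Matrix (Fin n) (Fin n) ℂ) (i j : Fin n) :
    (Nshift n * M) i j = if h : (i : ℕ) + 1 < n then M ⟨(i : ℕ) + 1, h⟩ j else 0 := by
  rw [Matrix.mul_apply]
  split
  · next h =>
    rw [Finset.sum_eq_single (⟨(i : ℕ) + 1, h⟩ : Fin n)]
    · simp [Nshift]
    · intro k _ hk
      have : ¬ (k : ℕ) = (i : ℕ) + 1 := fun hc => hk (Fin.ext hc)
      simp [Nshift, this]
    · simp
  · next h =>
    apply Finset.sum_eq_zero
    intro k _
    have : ¬ (k : ℕ) = (i : ℕ) + 1 := by have := k.isLt; omega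
    simp [Nshift, this]

lemma mul_Nshift (n : ℕ) (M : Matrix (Fin n) (Fin n) ℂ) (i j : Fin n) :
    (M * Nshift n) i j = if 0 < (j : ℕ) then
      M i ⟨(j : ℕ) - 1, by have := j.isLt; omega⟩ else 0 := by
  rw [Matrix.mul_apply]
  split
  · next h =>
    rw [Finset.sum_eq_single (⟨(j : ℕ) - 1, by have := j.isLt; omega⟩ : Fin n)]
    · have hcond : (j : ℕ) = ((j : ℕ) - 1) + 1 := by omega
      simp only [Nshift, Matrix.of_apply, Fin.val_mk, if_pos hcond, mul_one]
    · intro k _ hk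
      have : ¬ (j : ℕ) = (k : ℕ) + 1 := by
        intro hc
        exact hk (Fin.ext (by simp only [Fin.val_mk]; omega))
      simp [Nshift, this]
    · simp
  · next h =>
    apply Finset.sum_eq_zero
    intro k _
    have : ¬ (j : ℕ) = (k : ℕ) + 1 := by omega
    simp [Nshift, this]

lemma core (t : ℂ) (n : ℕ) :
    Nshift n * Bmat t n + (t ^ 2) • (Bmat t n * Nshift n)
      + t • (Nshift n * Bmat t n * Nshift n) = 0 := by
  ext i j
  simp only [Matrix.add_apply, Matrix.smul_apply, Matrix.zero_apply, smul_eq_mul,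
    Nshift_mul, mul_Nshift]
  by_cases hj : 0 < (j : ℕ)
  · by_cases hi : (i : ℕ) + 1 < n
    · rw [dif_pos hi, if_pos hj, if_pos hj, dif_pos hi]
      simp only [Bmat, Matrix.of_apply, Fin.val_mk]
      by_cases hcase : (j : ℕ) - 1 < (i : ℕ)
      · have g1 : ¬ ((i : ℕ) + 1 ≤ (j : ℕ)) := by omega
        have g2 : ¬ ((i : ℕ) ≤ (j : ℕ) - 1) := by omega
        have g3 : ¬ ((i : ℕ) + 1 ≤ (j : ℕ) - 1) := by omega
        rw [if_neg g1, if_neg g2, if_neg g3]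
        ring
      · by_cases hcase2 : (j : ℕ) - 1 = (i : ℕ)
        · have g1 : ((i : ℕ) + 1 ≤ (j : ℕ)) := by omega
          have g2 : ((i : ℕ) ≤ (j : ℕ) - 1) := by omega
          have g3 : ¬ ((i : ℕ) + 1 ≤ (j : ℕ) - 1) := by omega
          rw [if_pos g1, if_pos g2, if_neg g3]
          have e1 : (j : ℕ) - ((i : ℕ) + 1) = 0 := by omega
          have e2 : (j : ℕ) - 1 - (i : ℕ) = 0 := by omega
          obtain ⟨q, hq⟩ : ∃ q, n - 1 - (i : ℕ) = q + 1 := ⟨n - 2 - (i : ℕ), by omega⟩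
          have e3 : n - 1 - ((i : ℕ) + 1) = q := by omega
          have ex1 : (i : ℕ) + 1 + (j : ℕ) = 2 * (i : ℕ) + 2 := by omega
          have ex2 : (i : ℕ) + ((j : ℕ) - 1) = 2 * (i : ℕ) := by omega
          rw [e1, e2, e3, hq, ex1, ex2]
          simp only [Nat.choose_zero_right, Nat.cast_one]
          ring
        · have hdj : (i : ℕ) + 1 ≤ (j : ℕ) - 1 := by omega
          have g1 : ((i : ℕ) + 1 ≤ (j : ℕ)) := by omega
          have g2 : ((i : ℕ) ≤ (j : ℕ) - 1) := by omega
          rw [if_pos g1, if_pos g2, if_pos hdj]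
          have hjn : (j : ℕ) < n := j.isLt
          obtain ⟨m, hm⟩ : ∃ m, n - 2 - (i : ℕ) = m + 1 := ⟨n - 3 - (i : ℕ), by omega⟩
          obtain ⟨c, hc⟩ : ∃ c, (j : ℕ) - 1 - (i : ℕ) = c + 1 := ⟨(j : ℕ) - (i : ℕ) - 2, by omega⟩
          obtain ⟨p, hp⟩ : ∃ p, (j : ℕ) = p + 1 := ⟨(j : ℕ) - 1, by omega⟩
          have e1 : n - 2 - ((i : ℕ) + 1) = m := by omega
          have e2 : (j : ℕ) - ((i : ℕ) + 1) = c + 1 := by omega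
          have e3 : (j : ℕ) - 1 - ((i : ℕ) + 1) = c := by omega
          have e4 : n - 1 - (i : ℕ) = m + 2 := by omega
          have e5 : n - 1 - ((i : ℕ) + 1) = m + 1 := by omega
          have e6 : (j : ℕ) - 1 = p := by omega
          rw [e1, e2, e3, hc, hm, e4, e5, e6, hp]
          have pascal : (m + 1).choose (c + 1) = m.choose c + m.choose (c + 1) :=
            Nat.choose_succ_succ m c
          rw [pascal]
          push_cast
          ring
    · rw [dif_neg hi, if_pos hj, dif_neg hi]
      simp only [Bmat, Matrix.of_apply, Fin.val_mk]
      have g2 : ¬ ((i : ℕ) ≤ (j : ℕ) - 1) := by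
        have := j.isLt; have := i.isLt; omega
      rw [if_neg g2]
      simp
  · rw [if_neg hj, if_neg hj]
    split
    · next h =>
      simp only [Bmat, Matrix.of_apply, Fin.val_mk]
      have g1 : ¬ ((i : ℕ) + 1 ≤ (j : ℕ)) := by omega
      rw [if_neg g1]
      ring
    · ring

lemma key1 {t : ℂ} (ht : t ≠ 0) (n : ℕ) :
    jordanBlock t n * Bmat t n * jordanBlock t⁻¹ n = Bmat t n := by
  have hcore := core t n
  rw [jordanBlock_eq, jordanBlock_eq]
  have expand : (t • (1 : Matrix (Fin n) (Fin n) ℂ) + Nshift n) * Bmat t n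
      * (t⁻¹ • (1 : Matrix (Fin n) (Fin n) ℂ) + Nshift n)
      = (t * t⁻¹) • Bmat t n + (t⁻¹ • (Nshift n * Bmat t n) + t • (Bmat t n * Nshift n)
          + Nshift n * Bmat t n * Nshift n) := by
    simp only [Matrix.add_mul, Matrix.mul_add, Matrix.smul_mul, Matrix.mul_smul,
      Matrix.one_mul, Matrix.mul_one, smul_smul, smul_add]
    rw [mul_comm t⁻¹ t]
    abel
  rw [expand, mul_inv_cancel₀ ht, one_smul]
  have collapse : t⁻¹ • (Nshift n * Bmat t n) + t • (Bmat t n * Nshift n)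
      + Nshift n * Bmat t n * Nshift n
      = t⁻¹ • (Nshift n * Bmat t n + (t ^ 2) • (Bmat t n * Nshift n)
          + t • (Nshift n * Bmat t n * Nshift n)) := by
    simp only [smul_add, smul_smul]
    rw [show t⁻¹ * t ^ 2 = t by field_simp, show t⁻¹ * t = 1 by field_simp, one_smul]
  rw [collapse, hcore, smul_zero, add_zero]

lemma my_choose (m d a : ℕ) (h : a ≤ d) :
    m.choose a * (m - a).choose (d - a) = m.choose d * d.choose a := by
  rcases le_or_gt d m with hdm | hdm
  · exact (Nat.choose_mul (n := m) h).symm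
  · rcases le_or_gt a m with ham | ham
    · rw [Nat.choose_eq_zero_of_lt hdm, Nat.choose_eq_zero_of_lt (by omega : m - a < d - a)]
      simp
    · rw [Nat.choose_eq_zero_of_lt hdm, Nat.choose_eq_zero_of_lt ham]
      simp

lemma alt_sum (d : ℕ) :
    ∑ a ∈ range (d + 1), ((-1 : ℂ)) ^ a * (d.choose a : ℂ) = if d = 0 then 1 else 0 := by
  have h := Int.alternating_sum_range_choose (n := d)
  have hcast : ((∑ m ∈ range (d + 1), ((-1) ^ m * d.choose m : ℤ) : ℤ) : ℂ)
      = ∑ a ∈ range (d + 1), ((-1 : ℂ)) ^ a * (d.choose a : ℂ) := by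
    push_cast
    rfl
  rw [← hcast, h]
  split <;> simp

lemma key2_sum (m d : ℕ) :
    ∑ a ∈ range (d + 1), ((-1 : ℂ)) ^ a * (m.choose a : ℂ) * ((m - a).choose (d - a) : ℂ)
      = if d = 0 then 1 else 0 := by
  have step : ∀ a ∈ range (d + 1),
      ((-1 : ℂ)) ^ a * (m.choose a : ℂ) * ((m - a).choose (d - a) : ℂ)
        = (m.choose d : ℂ) * (((-1 : ℂ)) ^ a * (d.choose a : ℂ)) := by
    intro a ha
    rw [mem_range] at ha
    have hch : (m.choose a * (m - a).choose (d - a) : ℕ) = m.choose d * d.choose a :=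
      my_choose m d a (by omega)
    have hc : ((m.choose a : ℂ) * ((m - a).choose (d - a) : ℂ))
        = (m.choose d : ℂ) * (d.choose a : ℂ) := by
      exact_mod_cast congrArg (Nat.cast : ℕ → ℂ) hch
    calc ((-1 : ℂ)) ^ a * (m.choose a : ℂ) * ((m - a).choose (d - a) : ℂ)
        = ((-1 : ℂ)) ^ a * ((m.choose a : ℂ) * ((m - a).choose (d - a) : ℂ)) := by ring
      _ = ((-1 : ℂ)) ^ a * ((m.choose d : ℂ) * (d.choose a : ℂ)) := by rw [hc]
      _ = (m.choose d : ℂ) * (((-1 : ℂ)) ^ a * (d.choose a : ℂ)) := by ring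
  rw [Finset.sum_congr rfl step, ← Finset.mul_sum, alt_sum]
  split
  · next h => simp [h]
  · simp

lemma neg_one_pow_sub (e a : ℕ) (h : a ≤ e) :
    ((-1 : ℂ)) ^ e * ((-1 : ℂ)) ^ (e - a) = ((-1 : ℂ)) ^ a := by
  have he : e = (e - a) + a := by omega
  calc ((-1 : ℂ)) ^ e * ((-1 : ℂ)) ^ (e - a)
      = ((-1 : ℂ)) ^ ((e - a) + a) * ((-1 : ℂ)) ^ (e - a) := by rw [← he]
    _ = (((-1 : ℂ)) ^ (e - a)) ^ 2 * ((-1 : ℂ)) ^ a := by rw [pow_add]; ring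
    _ = ((-1 : ℂ)) ^ a := by
        rw [← pow_mul, mul_comm (e - a) 2, pow_mul, neg_one_sq, one_pow, one_mul]

lemma pow_cancel (t : ℂ) (ht : t ≠ 0) (m : ℕ) : t ^ m * (t⁻¹) ^ m = 1 := by
  rw [← mul_pow, mul_inv_cancel₀ ht, one_pow]

lemma key2 {t : ℂ} (ht : t ≠ 0) (n : ℕ) :
    Bmat t n * Bmat t⁻¹ n = 1 := by
  ext i j
  rw [Matrix.mul_apply, Matrix.one_apply]
  by_cases hij : (i : ℕ) ≤ (j : ℕ)
  · have hstep : ∀ k : Fin n, Bmat t n i k * Bmat t⁻¹ n k j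
        = if (i : ℕ) ≤ (k : ℕ) ∧ (k : ℕ) ≤ (j : ℕ) then
            ((-1 : ℂ)) ^ (n - 1 - (i : ℕ)) * ((-1 : ℂ)) ^ (n - 1 - (k : ℕ))
              * ((n - 2 - (i : ℕ)).choose ((k : ℕ) - (i : ℕ)) : ℂ)
              * ((n - 2 - (k : ℕ)).choose ((j : ℕ) - (k : ℕ)) : ℂ)
              * (t⁻¹) ^ ((j : ℕ) - (i : ℕ))
          else 0 := by
      intro k
      simp only [Bmat, Matrix.of_apply, inv_inv]
      by_cases h1 : (i : ℕ) ≤ (k : ℕ)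
      · by_cases h2 : (k : ℕ) ≤ (j : ℕ)
        · rw [if_pos h1, if_pos h2, if_pos ⟨h1, h2⟩]
          have hkj : (k : ℕ) + (j : ℕ) = ((i : ℕ) + (k : ℕ)) + ((j : ℕ) - (i : ℕ)) := by omega
          have hpow : t ^ ((i : ℕ) + (k : ℕ)) * (t⁻¹) ^ ((k : ℕ) + (j : ℕ))
              * ((t⁻¹) ^ (2 * (n - 1)) * t ^ (2 * (n - 1))) = (t⁻¹) ^ ((j : ℕ) - (i : ℕ)) := by
            rw [hkj]
            calc _ = (t ^ ((i : ℕ) + (k : ℕ)) * (t⁻¹) ^ ((i : ℕ) + (k : ℕ)))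
                  * (t ^ (2 * (n - 1)) * (t⁻¹) ^ (2 * (n - 1)))
                  * (t⁻¹) ^ ((j : ℕ) - (i : ℕ)) := by
                  rw [pow_add]; ring
              _ = _ := by rw [pow_cancel t ht, pow_cancel t ht]; ring
          calc ((-1 : ℂ)) ^ (n - 1 - (i : ℕ)) * ((n - 2 - (i : ℕ)).choose ((k : ℕ) - (i : ℕ)) : ℂ)
                * t ^ ((i : ℕ) + (k : ℕ)) * (t⁻¹) ^ (2 * (n - 1))
                * (((-1 : ℂ)) ^ (n - 1 - (k : ℕ))
                  * ((n - 2 - (k : ℕ)).choose ((j : ℕ) - (k : ℕ)) : ℂ)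
                  * (t⁻¹) ^ ((k : ℕ) + (j : ℕ)) * t ^ (2 * (n - 1)))
              = ((-1 : ℂ)) ^ (n - 1 - (i : ℕ)) * ((-1 : ℂ)) ^ (n - 1 - (k : ℕ))
                * ((n - 2 - (i : ℕ)).choose ((k : ℕ) - (i : ℕ)) : ℂ)
                * ((n - 2 - (k : ℕ)).choose ((j : ℕ) - (k : ℕ)) : ℂ)
                * (t ^ ((i : ℕ) + (k : ℕ)) * (t⁻¹) ^ ((k : ℕ) + (j : ℕ))
                  * ((t⁻¹) ^ (2 * (n - 1)) * t ^ (2 * (n - 1)))) := by ring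
            _ = _ := by rw [hpow]
        · rw [if_neg h2, if_neg (by tauto : ¬ ((i : ℕ) ≤ (k : ℕ) ∧ (k : ℕ) ≤ (j : ℕ))), mul_zero]
      · rw [if_neg h1, if_neg (by tauto : ¬ ((i : ℕ) ≤ (k : ℕ) ∧ (k : ℕ) ≤ (j : ℕ))), zero_mul]
    rw [Finset.sum_congr rfl (fun k _ => hstep k)]
    rw [show (∑ k : Fin n, if (i : ℕ) ≤ (k : ℕ) ∧ (k : ℕ) ≤ (j : ℕ) then
        ((-1 : ℂ)) ^ (n - 1 - (i : ℕ)) * ((-1 : ℂ)) ^ (n - 1 - (k : ℕ))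
          * ((n - 2 - (i : ℕ)).choose ((k : ℕ) - (i : ℕ)) : ℂ)
          * ((n - 2 - (k : ℕ)).choose ((j : ℕ) - (k : ℕ)) : ℂ)
          * (t⁻¹) ^ ((j : ℕ) - (i : ℕ)) else 0)
        = ∑ k ∈ range n, (fun k : ℕ => if (i : ℕ) ≤ k ∧ k ≤ (j : ℕ) then
            ((-1 : ℂ)) ^ (n - 1 - (i : ℕ)) * ((-1 : ℂ)) ^ (n - 1 - k)
              * ((n - 2 - (i : ℕ)).choose (k - (i : ℕ)) : ℂ)
              * ((n - 2 - k).choose ((j : ℕ) - k) : ℂ)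
              * (t⁻¹) ^ ((j : ℕ) - (i : ℕ)) else 0) k
      from (Fin.sum_univ_eq_sum_range (fun k : ℕ => if (i : ℕ) ≤ k ∧ k ≤ (j : ℕ) then
            ((-1 : ℂ)) ^ (n - 1 - (i : ℕ)) * ((-1 : ℂ)) ^ (n - 1 - k)
              * ((n - 2 - (i : ℕ)).choose (k - (i : ℕ)) : ℂ)
              * ((n - 2 - k).choose ((j : ℕ) - k) : ℂ)
              * (t⁻¹) ^ ((j : ℕ) - (i : ℕ)) else 0) n)]
    rw [show (∑ k ∈ range n, (fun k : ℕ => if (i : ℕ) ≤ k ∧ k ≤ (j : ℕ) then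
            ((-1 : ℂ)) ^ (n - 1 - (i : ℕ)) * ((-1 : ℂ)) ^ (n - 1 - k)
              * ((n - 2 - (i : ℕ)).choose (k - (i : ℕ)) : ℂ)
              * ((n - 2 - k).choose ((j : ℕ) - k) : ℂ)
              * (t⁻¹) ^ ((j : ℕ) - (i : ℕ)) else 0) k)
        = ∑ k ∈ Finset.Ico (i : ℕ) ((j : ℕ) + 1), (fun k : ℕ =>
            if (i : ℕ) ≤ k ∧ k ≤ (j : ℕ) then
            ((-1 : ℂ)) ^ (n - 1 - (i : ℕ)) * ((-1 : ℂ)) ^ (n - 1 - k)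
              * ((n - 2 - (i : ℕ)).choose (k - (i : ℕ)) : ℂ)
              * ((n - 2 - k).choose ((j : ℕ) - k) : ℂ)
              * (t⁻¹) ^ ((j : ℕ) - (i : ℕ)) else 0) k
      from (Finset.sum_subset
        (fun x hx => by rw [Finset.mem_Ico] at hx; have := j.isLt;
                        exact Finset.mem_range.2 (by omega))
        (fun x _ hx => by rw [Finset.mem_Ico] at hx; rw [if_neg (by omega)])).symm]
    rw [Finset.sum_Ico_eq_sum_range]
    have hd : (j : ℕ) + 1 - (i : ℕ) = ((j : ℕ) - (i : ℕ)) + 1 := by omega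
    rw [hd]
    have hterm : ∀ a ∈ range (((j : ℕ) - (i : ℕ)) + 1),
        (if (i : ℕ) ≤ (i : ℕ) + a ∧ (i : ℕ) + a ≤ (j : ℕ) then
          ((-1 : ℂ)) ^ (n - 1 - (i : ℕ)) * ((-1 : ℂ)) ^ (n - 1 - ((i : ℕ) + a))
            * ((n - 2 - (i : ℕ)).choose (((i : ℕ) + a) - (i : ℕ)) : ℂ)
            * ((n - 2 - ((i : ℕ) + a)).choose ((j : ℕ) - ((i : ℕ) + a)) : ℂ)
            * (t⁻¹) ^ ((j : ℕ) - (i : ℕ)) else 0)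
        = (((-1 : ℂ)) ^ a * ((n - 2 - (i : ℕ)).choose a : ℂ)
            * (((n - 2 - (i : ℕ)) - a).choose (((j : ℕ) - (i : ℕ)) - a) : ℂ))
            * (t⁻¹) ^ ((j : ℕ) - (i : ℕ)) := by
      intro a ha
      rw [mem_range] at ha
      have hjn : (j : ℕ) < n := j.isLt
      have hin : (i : ℕ) < n := i.isLt
      rw [if_pos ⟨by omega, by omega⟩]
      have e1 : ((i : ℕ) + a) - (i : ℕ) = a := by omega
      have e2 : n - 1 - ((i : ℕ) + a) = (n - 1 - (i : ℕ)) - a := by omega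
      have e3 : n - 2 - ((i : ℕ) + a) = (n - 2 - (i : ℕ)) - a := by omega
      have e4 : (j : ℕ) - ((i : ℕ) + a) = ((j : ℕ) - (i : ℕ)) - a := by omega
      rw [e1, e2, e3, e4]
      have hsign := neg_one_pow_sub (n - 1 - (i : ℕ)) a (by omega)
      calc ((-1 : ℂ)) ^ (n - 1 - (i : ℕ)) * ((-1 : ℂ)) ^ ((n - 1 - (i : ℕ)) - a)
            * ((n - 2 - (i : ℕ)).choose a : ℂ)
            * (((n - 2 - (i : ℕ)) - a).choose (((j : ℕ) - (i : ℕ)) - a) : ℂ)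
            * (t⁻¹) ^ ((j : ℕ) - (i : ℕ))
          = (((-1 : ℂ)) ^ (n - 1 - (i : ℕ)) * ((-1 : ℂ)) ^ ((n - 1 - (i : ℕ)) - a))
            * ((n - 2 - (i : ℕ)).choose a : ℂ)
            * (((n - 2 - (i : ℕ)) - a).choose (((j : ℕ) - (i : ℕ)) - a) : ℂ)
            * (t⁻¹) ^ ((j : ℕ) - (i : ℕ)) := by ring
        _ = _ := by rw [hsign]
    rw [Finset.sum_congr rfl hterm, ← Finset.sum_mul, key2_sum]
    by_cases hij2 : i = j
    · have hd0 : (j : ℕ) - (i : ℕ) = 0 := by rw [hij2, Nat.sub_self]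
      rw [hd0, if_pos rfl, if_pos hij2, pow_zero, one_mul]
    · have hne : ¬ ((j : ℕ) - (i : ℕ)) = 0 := by
        have : ¬ (i : ℕ) = (j : ℕ) := fun h => hij2 (Fin.ext h)
        omega
      rw [if_neg hne, if_neg hij2, zero_mul]
  · rw [if_neg (fun h : i = j => hij (by rw [h]))]
    apply Finset.sum_eq_zero
    intro k _
    simp only [Bmat, Matrix.of_apply]
    by_cases h1 : (i : ℕ) ≤ (k : ℕ)
    · rw [if_neg (by omega : ¬ (k : ℕ) ≤ (j : ℕ)), mul_zero]
    · rw [if_neg h1, zero_mul]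

lemma Bmat_map (t : ℂ) (n : ℕ) :
    (Bmat t n).map (starRingEnd ℂ) = Bmat (starRingEnd ℂ t) n := by
  ext i j
  simp only [Bmat, Matrix.map_apply, Matrix.of_apply, apply_ite (starRingEnd ℂ)]
  simp [map_pow, map_inv₀]

lemma jordanBlock_map (lam : ℂ) (n : ℕ) :
    (jordanBlock lam n).map (starRingEnd ℂ) = jordanBlock (starRingEnd ℂ lam) n := by
  ext i j
  simp only [jordanBlock, Matrix.map_apply, Matrix.of_apply, apply_ite (starRingEnd ℂ)]
  simp

/-- For `λ ≠ 0` with `|λ| ≠ 1`, the block diagonal matrix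
`A = diag(J(λ,n), J(conj(λ)⁻¹, n))` admits `C` with `C * conj C = I` and
`C A C⁻¹ = (conj A)⁻¹`. -/
theorem jordan_pair_strongly_c_reversible (n : ℕ) (lam : ℂ)
    (h0 : lam ≠ 0) (h1 : ‖lam‖ ≠ 1) :
    ∃ C : Matrix (Fin n ⊕ Fin n) (Fin n ⊕ Fin n) ℂ, IsUnit C ∧
      C * C.map (starRingEnd ℂ) = 1 ∧
      C * (Matrix.fromBlocks (jordanBlock lam n) 0 0
            (jordanBlock ((starRingEnd ℂ lam)⁻¹) n)) * C⁻¹ =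
        ((Matrix.fromBlocks (jordanBlock lam n) 0 0
            (jordanBlock ((starRingEnd ℂ lam)⁻¹) n)).map (starRingEnd ℂ))⁻¹ := by
  have hν0 : (starRingEnd ℂ) lam ≠ 0 := fun h =>
    h0 (by rw [← Complex.conj_conj lam, h, map_zero])
  have hlinv0 : lam⁻¹ ≠ 0 := inv_ne_zero h0
  set A : Matrix (Fin n ⊕ Fin n) (Fin n ⊕ Fin n) ℂ :=
    Matrix.fromBlocks (jordanBlock lam n) 0 0 (jordanBlock (((starRingEnd ℂ) lam)⁻¹) n) with hA
  set C : Matrix (Fin n ⊕ Fin n) (Fin n ⊕ Fin n) ℂ :=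
    Matrix.fromBlocks 0 (Bmat ((starRingEnd ℂ) lam) n) (Bmat lam⁻¹ n) 0 with hC
  have h0map : (0 : Matrix (Fin n) (Fin n) ℂ).map (starRingEnd ℂ) = 0 :=
    Matrix.map_zero _ (map_zero _)
  have hCmap : C.map (starRingEnd ℂ)
      = Matrix.fromBlocks 0 (Bmat lam n) (Bmat (((starRingEnd ℂ) lam)⁻¹) n) 0 := by
    rw [hC, Matrix.fromBlocks_map, h0map, Bmat_map, Bmat_map, Complex.conj_conj, map_inv₀]
  have hCC : C * C.map (starRingEnd ℂ) = 1 := by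
    rw [hCmap, hC, Matrix.fromBlocks_multiply]
    have e1 : Bmat ((starRingEnd ℂ) lam) n * Bmat (((starRingEnd ℂ) lam)⁻¹) n = 1 := key2 hν0 n
    have e2 : Bmat lam⁻¹ n * Bmat lam n = 1 := by
      have h := key2 hlinv0 n
      rwa [inv_inv] at h
    simp only [Matrix.zero_mul, Matrix.mul_zero, add_zero, zero_add]
    rw [e1, e2, Matrix.fromBlocks_one]
  have hAmap : A.map (starRingEnd ℂ) =
      Matrix.fromBlocks (jordanBlock ((starRingEnd ℂ) lam) n) 0 0 (jordanBlock lam⁻¹ n) := by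
    rw [hA, Matrix.fromBlocks_map, h0map, jordanBlock_map, jordanBlock_map, map_inv₀,
      Complex.conj_conj]
  have hCA : A.map (starRingEnd ℂ) * C * A = C := by
    rw [hAmap, hC, hA, Matrix.fromBlocks_multiply, Matrix.fromBlocks_multiply]
    have e1 : jordanBlock ((starRingEnd ℂ) lam) n * Bmat ((starRingEnd ℂ) lam) n
        * jordanBlock (((starRingEnd ℂ) lam)⁻¹) n = Bmat ((starRingEnd ℂ) lam) n := key1 hν0 n
    have e2 : jordanBlock lam⁻¹ n * Bmat lam⁻¹ n * jordanBlock lam n = Bmat lam⁻¹ n := by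
      have h := key1 hlinv0 n
      rwa [inv_inv] at h
    simp only [Matrix.zero_mul, Matrix.mul_zero, add_zero, zero_add]
    rw [e1, e2]
  have hUnit : IsUnit C := by
    apply (Matrix.isUnit_iff_isUnit_det C).mpr
    apply IsUnit.of_mul_eq_one (C.map (starRingEnd ℂ)).det
    rw [← Matrix.det_mul, hCC, Matrix.det_one]
  have hCinv : C⁻¹ = C.map (starRingEnd ℂ) := Matrix.inv_eq_right_inv hCC
  refine ⟨C, hUnit, hCC, ?_⟩
  refine (Matrix.inv_eq_right_inv ?_).symm
  rw [hCinv, ← Matrix.mul_assoc, ← Matrix.mul_assoc, hCA, hCC]
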